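/- arXiv:2006.06090 — 5 statements merged into one kernel-verified Lean document; each statement's English description precedes it below -/
import Mathlib

section
/- Let r, s ≥ 1 and let t, u ≥ 1 satisfy 1/t + 1/u = 1. Then for every A ∈ ℝ^{m×n} and B ∈ ℝ^{n×K}, the L_{r,s} norm satisfies the sub-multiplicative property ‖AB‖_{r,s} ≤ ‖A‖_{1,u} · ‖B‖_{t,s}. -/
open Real Matrix Finset

/-- The ℓ_r norm of a vector z ∈ ℝ^d: (Σ_i |z_i|^r)^(1/r). -/
noncomputable def lnorm {d : ℕ} (r : ℝ) (z : Fin d → ℝ) : ℝ :=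
  (∑ i, |z i| ^ r) ^ (1 / r)

/-- The L_{r,s} matrix norm: the ℓ_s norm of the vector of ℓ_r norms of the columns. -/
noncomputable def Lnorm {m n : ℕ} (r s : ℝ) (A : Matrix (Fin m) (Fin n) ℝ) : ℝ :=
  (∑ j, (∑ i, |A i j| ^ r) ^ (s / r)) ^ (1 / s)

/-- Generalized Minkowski inequality for finite sums. -/
lemma minkowski_finsum {ι κ : Type*} (s : Finset ι) (t : Finset κ) (f : κ → ι → ℝ) {p : ℝ}
    (hp : 1 ≤ p) :
    (∑ i ∈ s, |∑ k ∈ t, f k i| ^ p) ^ (1 / p) ≤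
      ∑ k ∈ t, (∑ i ∈ s, |f k i| ^ p) ^ (1 / p) := by
  have hp0 : p ≠ 0 := by positivity
  induction t using Finset.cons_induction with
  | empty =>
      simp only [Finset.sum_empty, abs_zero, Real.zero_rpow hp0, Finset.sum_const_zero]
      rw [Real.zero_rpow (one_div_ne_zero hp0)]
  | cons a t' hx ih =>
      simp only [Finset.sum_cons]
      calc (∑ i ∈ s, |f a i + ∑ k ∈ t', f k i| ^ p) ^ (1 / p)
          ≤ (∑ i ∈ s, |f a i| ^ p) ^ (1 / p) +
            (∑ i ∈ s, |∑ k ∈ t', f k i| ^ p) ^ (1 / p) := Real.Lp_add_le s _ _ hp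
        _ ≤ _ := by exact add_le_add le_rfl ih

/-- ℓ_p norm is at most ℓ_1 norm for nonnegative functions and p ≥ 1. -/
lemma lp_le_l1 {ι : Type*} (s : Finset ι) (f : ι → ℝ) {p : ℝ} (hp : 1 ≤ p)
    (hf : ∀ i ∈ s, 0 ≤ f i) :
    (∑ i ∈ s, f i ^ p) ^ (1 / p) ≤ ∑ i ∈ s, f i := by
  have hp0 : 0 < p := lt_of_lt_of_le one_pos hp
  set S := ∑ i ∈ s, f i with hS
  have hS0 : 0 ≤ S := Finset.sum_nonneg hf
  have key : ∑ i ∈ s, f i ^ p ≤ S ^ p := by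
    calc ∑ i ∈ s, f i ^ p ≤ ∑ i ∈ s, f i * S ^ (p - 1) := by
          apply Finset.sum_le_sum
          intro i hi
          rcases eq_or_lt_of_le (hf i hi) with h0 | h0
          · rw [← h0, Real.zero_rpow hp0.ne', zero_mul]
          · have hfS : f i ≤ S := Finset.single_le_sum hf hi
            calc f i ^ p = f i * f i ^ (p - 1) := by
                  rw [← Real.rpow_one_add' (le_of_lt h0) (by linarith)]
                  ring_nf
              _ ≤ f i * S ^ (p - 1) := by
                  apply mul_le_mul_of_nonneg_left _ (le_of_lt h0)
                  exact Real.rpow_le_rpow (le_of_lt h0) hfS (by linarith)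
      _ = S * S ^ (p - 1) := by rw [← Finset.sum_mul]
      _ = S ^ p := by
          rcases eq_or_lt_of_le hS0 with h0 | h0
          · rw [← h0, zero_mul, Real.zero_rpow hp0.ne']
          · rw [← Real.rpow_one_add' (le_of_lt h0) (by linarith)]; ring_nf
  calc (∑ i ∈ s, f i ^ p) ^ (1 / p) ≤ (S ^ p) ^ (1 / p) :=
        Real.rpow_le_rpow (Finset.sum_nonneg fun i hi => Real.rpow_nonneg (hf i hi) p) key
          (by positivity)
    _ = S := by rw [← Real.rpow_mul hS0, mul_one_div, div_self hp0.ne', Real.rpow_one]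

/-- Sub-multiplicativity of the L_{r,s} norm:
‖AB‖_{r,s} ≤ ‖A‖_{1,u} · ‖B‖_{t,s} whenever t, u ≥ 1 with 1/t + 1/u = 1. -/
theorem Lnorm_submultiplicative {m n K : ℕ} (r s t u : ℝ)
    (hr : 1 ≤ r) (hs : 1 ≤ s) (ht : 1 ≤ t) (hu : 1 ≤ u) (htu : 1 / t + 1 / u = 1)
    (A : Matrix (Fin m) (Fin n) ℝ) (B : Matrix (Fin n) (Fin K) ℝ) :
    Lnorm r s (A * B) ≤ Lnorm 1 u A * Lnorm t s B := by
  have hr0 : 0 < r := lt_of_lt_of_le one_pos hr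
  have hs0 : 0 < s := lt_of_lt_of_le one_pos hs
  have ht0 : 0 < t := lt_of_lt_of_le one_pos ht
  have hu0 : 0 < u := lt_of_lt_of_le one_pos hu
  have ht1 : 1 < t := by
    rcases eq_or_lt_of_le ht with h | h
    · exfalso
      rw [← h, one_div_one] at htu
      have : 1 / u = 0 := by linarith
      have : (0:ℝ) < 1 / u := by positivity
      linarith
    · exact h
  have hconj : Real.HolderConjugate t u := ⟨by rw [inv_one, ← one_div, ← one_div]; exact htu, ht0, hu0⟩
  set Na := Lnorm 1 u A with hNa
  have hNa0 : 0 ≤ Na := by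
    rw [hNa, Lnorm]
    positivity
  set M : Fin K → ℝ := fun j => (∑ k, |B k j| ^ t) ^ (1 / t) with hM
  have hM0 : ∀ j, 0 ≤ M j := fun j => by positivity
  -- key column inequality
  have key : ∀ j, (∑ i, |(A * B) i j| ^ r) ^ (1 / r) ≤ Na * M j := by
    intro j
    have step1 : (∑ i, |(A * B) i j| ^ r) ^ (1 / r) ≤
        ∑ k, (∑ i, |A i k * B k j| ^ r) ^ (1 / r) := by
      have := minkowski_finsum (Finset.univ : Finset (Fin m)) (Finset.univ : Finset (Fin n))
        (fun k i => A i k * B k j) hr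
      simpa [Matrix.mul_apply] using this
    have step2 : ∀ k, (∑ i, |A i k * B k j| ^ r) ^ (1 / r) =
        |B k j| * (∑ i, |A i k| ^ r) ^ (1 / r) := by
      intro k
      have : ∀ i, |A i k * B k j| ^ r = |A i k| ^ r * |B k j| ^ r := by
        intro i
        rw [abs_mul, Real.mul_rpow (abs_nonneg _) (abs_nonneg _)]
      simp_rw [this, ← Finset.sum_mul]
      rw [Real.mul_rpow (Finset.sum_nonneg fun i _ => Real.rpow_nonneg (abs_nonneg _) r)
        (Real.rpow_nonneg (abs_nonneg _) r), ← Real.rpow_mul (abs_nonneg _),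
        mul_one_div, div_self hr0.ne', Real.rpow_one, mul_comm]
    have step3 : ∀ k, (∑ i, |A i k| ^ r) ^ (1 / r) ≤ ∑ i, |A i k| :=
      fun k => lp_le_l1 _ _ hr fun i _ => abs_nonneg _
    have step4 : ∑ k, |B k j| * (∑ i, |A i k|) ≤ M j * Na := by
      have h2 := Real.inner_le_Lp_mul_Lq (Finset.univ : Finset (Fin n))
        (fun k => |B k j|) (fun k => ∑ i, |A i k|) hconj
      simp only [abs_abs] at h2
      have hNa' : Na = (∑ k, (∑ i, |A i k|) ^ u) ^ (1 / u) := by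
        rw [hNa]; unfold Lnorm; simp [Real.rpow_one]
      have habs : ∀ k : Fin n, |(∑ i, |A i k|)| ^ u = (∑ i, |A i k|) ^ u := fun k => by
        rw [abs_of_nonneg (Finset.sum_nonneg fun i _ => abs_nonneg (A i k))]
      calc ∑ k, |B k j| * (∑ i, |A i k|)
          ≤ (∑ k, |B k j| ^ t) ^ (1 / t) * (∑ k, |(∑ i, |A i k|)| ^ u) ^ (1 / u) := h2
        _ = M j * Na := by
            rw [hNa', hM]
            congr 2
            exact Finset.sum_congr rfl fun k _ => habs k
    calc (∑ i, |(A * B) i j| ^ r) ^ (1 / r)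
        ≤ ∑ k, (∑ i, |A i k * B k j| ^ r) ^ (1 / r) := step1
      _ = ∑ k, |B k j| * (∑ i, |A i k| ^ r) ^ (1 / r) := Finset.sum_congr rfl fun k _ => step2 k
      _ ≤ ∑ k, |B k j| * (∑ i, |A i k|) := by
          apply Finset.sum_le_sum
          intro k _
          exact mul_le_mul_of_nonneg_left (step3 k) (abs_nonneg _)
      _ ≤ M j * Na := step4
      _ = Na * M j := mul_comm _ _
  -- assemble
  have expand : ∀ (j : Fin K), (∑ i, |(A * B) i j| ^ r) ^ (s / r) =
      ((∑ i, |(A * B) i j| ^ r) ^ (1 / r)) ^ s := by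
    intro j
    rw [← Real.rpow_mul (Finset.sum_nonneg fun i _ => Real.rpow_nonneg (abs_nonneg _) r)]
    congr 1
    ring
  have expandB : ∀ (j : Fin K), (∑ k, |B k j| ^ t) ^ (s / t) = (M j) ^ s := by
    intro j
    rw [hM, ← Real.rpow_mul (Finset.sum_nonneg fun k _ => Real.rpow_nonneg (abs_nonneg _) t)]
    congr 1
    ring
  rw [Lnorm, Lnorm]
  calc (∑ j, (∑ i, |(A * B) i j| ^ r) ^ (s / r)) ^ (1 / s)
      ≤ (∑ j, (Na * M j) ^ s) ^ (1 / s) := by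
        apply Real.rpow_le_rpow
        · apply Finset.sum_nonneg
          intro j _
          positivity
        · apply Finset.sum_le_sum
          intro j _
          rw [expand j]
          exact Real.rpow_le_rpow (by positivity) (key j) (by positivity)
        · positivity
    _ = (Na ^ s * ∑ j, (M j) ^ s) ^ (1 / s) := by
        congr 1
        rw [Finset.mul_sum]
        apply Finset.sum_congr rfl
        intro j _
        rw [Real.mul_rpow hNa0 (hM0 j)]
    _ = Na * (∑ j, (M j) ^ s) ^ (1 / s) := by
        rw [Real.mul_rpow (by positivity) (Finset.sum_nonneg fun j _ => Real.rpow_nonneg (hM0 j) s),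
          ← Real.rpow_mul hNa0, mul_one_div, div_self hs0.ne', Real.rpow_one]
    _ = Na * (∑ j, (∑ k, |B k j| ^ t) ^ (s / t)) ^ (1 / s) := by
        congr 2
        exact Finset.sum_congr rfl fun j _ => (expandB j).symm
end

section
/- Let r, s ≥ 1 with 1/r + 1/s = 1, let B ∈ ℝ^{p×K}, and let l : ℝ^K → ℝ be L-Lipschitz with respect to the ℓ_r norm. Then the multivariate regression loss h_B(x, y) := l(y − B'x), viewed as a function of z = (x, y) ∈ ℝ^{p+K}, is Lipschitz with respect to the ℓ_r norm on ℝ^{p+K} with Lipschitz constant L·‖v‖_s, where v := (v_1, ..., v_p, 1, ..., 1) ∈ ℝ^{p+K} with v_i = Σ_{j=1}^K |B_{ij}|; that is, |h_B(x_1, y_1) − h_B(x_2, y_2)| ≤ L·‖v‖_s · ‖(x_1, y_1) − (x_2, y_2)‖_r for all (x_1, y_1), (x_2, y_2) ∈ ℝ^{p+K}. -/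
open Real Matrix Finset

lemma aux_sum_rpow_le {ι : Type*} {r : ℝ} (hr : 1 ≤ r) (s : Finset ι) (f : ι → ℝ)
    (hf : ∀ i ∈ s, 0 ≤ f i) :
    (∑ i ∈ s, f i ^ r) ^ (1 / r) ≤ ∑ i ∈ s, f i := by
  have hr0 : 0 < r := lt_of_lt_of_le one_pos hr
  set S := ∑ i ∈ s, f i with hS
  have hS0 : 0 ≤ S := Finset.sum_nonneg hf
  rcases hS0.eq_or_lt with h0 | hpos
  · have hall : ∀ i ∈ s, f i = 0 := (Finset.sum_eq_zero_iff_of_nonneg hf).1 h0.symm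
    have hz : ∑ i ∈ s, f i ^ r = 0 := Finset.sum_eq_zero fun i hi => by
      rw [hall i hi, Real.zero_rpow hr0.ne']
    rw [hz, Real.zero_rpow (by positivity)]
    exact hS0
  · have key : ∑ i ∈ s, f i ^ r ≤ S ^ r := by
      calc ∑ i ∈ s, f i ^ r ≤ ∑ i ∈ s, S ^ (r - 1) * f i := by
            refine Finset.sum_le_sum fun i hi => ?_
            rcases (hf i hi).eq_or_lt with h | h
            · rw [← h, Real.zero_rpow hr0.ne', mul_zero]
            · have hfi : f i ≤ S := Finset.single_le_sum hf hi
              have he : f i ^ (r - 1) * f i = f i ^ r := by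
                have := (Real.rpow_add h (r - 1) 1).symm
                rw [Real.rpow_one, sub_add_cancel] at this
                exact this
              rw [← he]
              have : f i ^ (r - 1) ≤ S ^ (r - 1) :=
                Real.rpow_le_rpow h.le hfi (by linarith)
              exact mul_le_mul_of_nonneg_right this h.le
        _ = S ^ (r - 1) * S := by rw [← Finset.mul_sum]
        _ = S ^ r := by
              have := (Real.rpow_add hpos (r - 1) 1).symm
              rw [Real.rpow_one, sub_add_cancel] at this
              exact this
    calc (∑ i ∈ s, f i ^ r) ^ (1 / r) ≤ (S ^ r) ^ (1 / r) :=
          Real.rpow_le_rpow (Finset.sum_nonneg fun i hi =>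
            Real.rpow_nonneg (hf i hi) r) key (by positivity)
      _ = S := by
          rw [← Real.rpow_mul hS0, mul_one_div, div_self hr0.ne', Real.rpow_one]

lemma aux_minkowski {K : ℕ} {ι : Type*} {r : ℝ} (hr : 1 ≤ r) (s : Finset ι)
    (a : ι → Fin K → ℝ) (ha : ∀ i j, 0 ≤ a i j) :
    (∑ j, (∑ i ∈ s, a i j) ^ r) ^ (1 / r) ≤ ∑ i ∈ s, (∑ j, a i j ^ r) ^ (1 / r) := by
  have hr0 : 0 < r := lt_of_lt_of_le one_pos hr
  induction s using Finset.cons_induction with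
  | empty =>
    simp [Real.zero_rpow hr0.ne', Real.zero_rpow (inv_ne_zero hr0.ne')]
  | cons c t hc ih =>
    simp only [Finset.sum_cons]
    calc (∑ j, (a c j + ∑ i ∈ t, a i j) ^ r) ^ (1 / r)
        ≤ (∑ j, a c j ^ r) ^ (1 / r) + (∑ j, (∑ i ∈ t, a i j) ^ r) ^ (1 / r) :=
          Real.Lp_add_le_of_nonneg (s := Finset.univ)
            (f := fun j => a c j) (g := fun j => ∑ i ∈ t, a i j) hr (fun j _ => ha c j)
            (fun j _ => Finset.sum_nonneg fun i _ => ha i j)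
      _ ≤ (∑ j, a c j ^ r) ^ (1 / r) + ∑ i ∈ t, (∑ j, a i j ^ r) ^ (1 / r) :=
          add_le_add (le_refl _) ih



/-- If l : ℝ^K → ℝ is L-Lipschitz w.r.t. the ℓ_r norm and 1/r + 1/s = 1, then
h_B(x, y) = l(y − B'x) is Lipschitz in z = (x, y) w.r.t. the ℓ_r norm on ℝ^{p+K} with
constant L·‖v‖_s, where v = (v_1, ..., v_p, 1, ..., 1) with v_i = Σ_j |B_{ij}|. -/
theorem mlr_1s_lipschitz {p K : ℕ} (r s L : ℝ)
    (hr : 1 ≤ r) (hs : 1 ≤ s) (hrs : 1 / r + 1 / s = 1)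
    (B : Matrix (Fin p) (Fin K) ℝ) (l : (Fin K → ℝ) → ℝ)
    (hl : ∀ u v : Fin K → ℝ, |l u - l v| ≤ L * lnorm r (u - v)) :
    ∀ (x₁ x₂ : Fin p → ℝ) (y₁ y₂ : Fin K → ℝ),
      |l (y₁ - Bᵀ.mulVec x₁) - l (y₂ - Bᵀ.mulVec x₂)| ≤
        L * lnorm s (Fin.append (fun i => ∑ j, |B i j|) (fun _ : Fin K => (1:ℝ)))
          * lnorm r (Fin.append x₁ y₁ - Fin.append x₂ y₂) := by
  intro x₁ x₂ y₁ y₂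
  have hr0 : 0 < r := lt_of_lt_of_le one_pos hr
  have hs0 : 0 < s := lt_of_lt_of_le one_pos hs
  set δx : Fin p → ℝ := x₁ - x₂ with hδx
  set δy : Fin K → ℝ := y₁ - y₂ with hδy
  set v : Fin (p + K) → ℝ := Fin.append (fun i => ∑ j, |B i j|) (fun _ : Fin K => (1:ℝ)) with hv
  set Δ : Fin (p + K) → ℝ := Fin.append δx δy with hΔ
  have hΔeq : Fin.append x₁ y₁ - Fin.append x₂ y₂ = Δ := by
    funext i
    refine Fin.addCases (fun i' => ?_) (fun j' => ?_) i <;>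
      simp [hΔ, hδx, hδy, Fin.append_left, Fin.append_right]
  rw [hΔeq]
  have hw : (y₁ - Bᵀ.mulVec x₁) - (y₂ - Bᵀ.mulVec x₂) = δy - Bᵀ.mulVec δx := by
    rw [hδy, hδx, Matrix.mulVec_sub]
    abel
  have hvnn : ∀ i, 0 ≤ v i := by
    intro i
    refine Fin.addCases (fun i' => ?_) (fun j' => ?_) i
    · rw [hv, Fin.append_left]
      exact Finset.sum_nonneg fun j _ => abs_nonneg _
    · rw [hv, Fin.append_right]
      exact zero_le_one
  by_cases hK : K = 0
  · subst hK
    have hu : y₁ - Bᵀ.mulVec x₁ = y₂ - Bᵀ.mulVec x₂ := Subsingleton.elim _ _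
    rw [hu, sub_self, abs_zero]
    have hv0 : lnorm s v = 0 := by
      unfold lnorm
      have hz : ∀ i : Fin (p + 0), |v i| ^ s = 0 := by
        intro i
        refine Fin.addCases (fun i' => ?_) (fun j' => Fin.elim0 j') i
        rw [hv, Fin.append_left]
        simp [Real.zero_rpow hs0.ne']
      rw [Finset.sum_congr rfl fun i _ => hz i]
      simp [Real.zero_rpow (show (1:ℝ)/s ≠ 0 by positivity), Real.zero_rpow (inv_ne_zero hs0.ne')]
    rw [hv0, mul_zero, zero_mul]
  · -- K ≥ 1
    have hKpos : 0 < K := Nat.pos_of_ne_zero hK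
    have hL : 0 ≤ L := by
      have h := hl (fun _ => 1) 0
      have hpos : 0 < lnorm r ((fun _ : Fin K => (1:ℝ)) - 0) := by
        unfold lnorm
        have : ∀ i : Fin K, |((fun _ : Fin K => (1:ℝ)) - 0) i| ^ r = 1 := by
          intro i; simp
        rw [Finset.sum_congr rfl fun i _ => this i, Finset.sum_const, Finset.card_univ,
          Fintype.card_fin, nsmul_eq_mul, mul_one]
        have : (0:ℝ) < (K:ℝ) := by exact_mod_cast hKpos
        positivity
      nlinarith [abs_nonneg (l (fun _ => 1) - l 0)]
    have hsr : Real.HolderConjugate s r := by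
      have hr1 : 1 < r := by
        rcases eq_or_lt_of_le hr with h | h
        · exfalso
          rw [← h] at hrs
          have := one_div_pos.2 hs0
          norm_num at hrs
          linarith
        · exact h
      have hs1 : 1 < s := by
        rcases eq_or_lt_of_le hs with h | h
        · exfalso
          rw [← h] at hrs
          have := one_div_pos.2 hr0
          norm_num at hrs
          linarith
        · exact h
      exact ⟨by rw [inv_eq_one_div, inv_eq_one_div, inv_one]; linarith, hs0, hr0⟩
    set M : Fin (p + K) → Fin K → ℝ :=
      Fin.append (fun i' j => B i' j) (fun j₀ j => if j = j₀ then 1 else 0) with hM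
    have hcoord : ∀ j, |(δy - Bᵀ.mulVec δx) j| ≤ ∑ i, |M i j| * |Δ i| := by
      intro j
      rw [Fin.sum_univ_add]
      have h1 : ∀ i' : Fin p, |M (Fin.castAdd K i') j| * |Δ (Fin.castAdd K i')|
          = |B i' j| * |δx i'| := by
        intro i'
        rw [hM, hΔ, Fin.append_left, Fin.append_left]
      have h2 : ∑ j' : Fin K, |M (Fin.natAdd p j') j| * |Δ (Fin.natAdd p j')| = |δy j| := by
        have he : ∀ j' : Fin K, |M (Fin.natAdd p j') j| * |Δ (Fin.natAdd p j')|
            = if j = j' then |δy j'| else 0 := by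
          intro j'
          rw [hM, hΔ, Fin.append_right, Fin.append_right]
          by_cases h : j = j' <;> simp [h]
        rw [Finset.sum_congr rfl fun j' _ => he j', Finset.sum_ite_eq]
        simp
      rw [Finset.sum_congr rfl fun i' _ => h1 i', h2]
      have hval : (δy - Bᵀ.mulVec δx) j = δy j - ∑ i', B i' j * δx i' := by
        simp [Matrix.mulVec, dotProduct, Matrix.transpose_apply]
      rw [hval]
      calc |δy j - ∑ i', B i' j * δx i'| ≤ |δy j| + |∑ i', B i' j * δx i'| := abs_sub _ _
        _ ≤ |δy j| + ∑ i', |B i' j * δx i'| :=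
            add_le_add (le_refl _) (Finset.abs_sum_le_sum_abs _ _)
        _ = (∑ i', |B i' j| * |δx i'|) + |δy j| := by
            rw [Finset.sum_congr rfl fun i' _ => abs_mul (B i' j) (δx i')]; ring
    have hstep1 : lnorm r (δy - Bᵀ.mulVec δx) ≤ ∑ i, (∑ j, (|M i j| * |Δ i|) ^ r) ^ (1/r) := by
      unfold lnorm
      calc (∑ j, |(δy - Bᵀ.mulVec δx) j| ^ r) ^ (1/r)
          ≤ (∑ j, (∑ i, |M i j| * |Δ i|) ^ r) ^ (1/r) :=
            Real.rpow_le_rpow (Finset.sum_nonneg fun j _ => Real.rpow_nonneg (abs_nonneg _) r)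
              (Finset.sum_le_sum fun j _ => Real.rpow_le_rpow (abs_nonneg _) (hcoord j) hr0.le)
              (by positivity)
        _ ≤ _ := aux_minkowski hr Finset.univ (fun i j => |M i j| * |Δ i|)
              (fun i j => mul_nonneg (abs_nonneg _) (abs_nonneg _))
    have hrow : ∀ i, (∑ j, (|M i j| * |Δ i|) ^ r) ^ (1/r)
        = |Δ i| * (∑ j, |M i j| ^ r) ^ (1/r) := by
      intro i
      have h1 : ∀ j, (|M i j| * |Δ i|) ^ r = |Δ i| ^ r * |M i j| ^ r := fun j => by
        rw [mul_comm, Real.mul_rpow (abs_nonneg _) (abs_nonneg _)]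
      have h2 : (|Δ i| ^ r) ^ ((1:ℝ)/r) = |Δ i| := by
        rw [← Real.rpow_mul (abs_nonneg _), mul_one_div, div_self hr0.ne', Real.rpow_one]
      rw [Finset.sum_congr rfl fun j _ => h1 j, ← Finset.mul_sum,
        Real.mul_rpow (Real.rpow_nonneg (abs_nonneg _) r)
          (Finset.sum_nonneg fun j _ => Real.rpow_nonneg (abs_nonneg _) r), h2]
    have hrowle : ∀ i, (∑ j, |M i j| ^ r) ^ ((1:ℝ)/r) ≤ v i := by
      intro i
      refine Fin.addCases (fun i' => ?_) (fun j₀ => ?_) i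
      · have h1 : ∀ j, |M (Fin.castAdd K i') j| = |B i' j| := fun j => by
          rw [hM, Fin.append_left]
        rw [Finset.sum_congr rfl fun j _ => by rw [h1 j], hv, Fin.append_left]
        exact aux_sum_rpow_le hr Finset.univ (fun j => |B i' j|) fun j _ => abs_nonneg _
      · have h1 : ∀ j, |M (Fin.natAdd p j₀) j| ^ r = if j = j₀ then 1 else 0 := fun j => by
          rw [hM, Fin.append_right]
          by_cases h : j = j₀ <;> simp [h, Real.zero_rpow hr0.ne']
        rw [Finset.sum_congr rfl fun j _ => h1 j, Finset.sum_ite_eq', hv, Fin.append_right]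
        simp
    have hsum : ∑ i, |Δ i| * (∑ j, |M i j| ^ r) ^ ((1:ℝ)/r) ≤ ∑ i, v i * |Δ i| := by
      refine Finset.sum_le_sum fun i _ => ?_
      rw [mul_comm (v i)]
      exact mul_le_mul_of_nonneg_left (hrowle i) (abs_nonneg _)
    have hholder : ∑ i, v i * |Δ i| ≤ lnorm s v * lnorm r Δ := by
      have h := Real.inner_le_Lp_mul_Lq_of_nonneg (s := Finset.univ) hsr
        (f := v) (g := fun i => |Δ i|) (fun i _ => hvnn i) (fun i _ => abs_nonneg _)
      calc ∑ i, v i * |Δ i| ≤ (∑ i, v i ^ s) ^ (1/s) * (∑ i, |Δ i| ^ r) ^ (1/r) := h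
        _ = lnorm s v * lnorm r Δ := by
            unfold lnorm
            have hvv : (∑ i, v i ^ s) = ∑ i, |v i| ^ s :=
              Finset.sum_congr rfl fun i _ => by rw [abs_of_nonneg (hvnn i)]
            rw [hvv]
    calc |l (y₁ - Bᵀ.mulVec x₁) - l (y₂ - Bᵀ.mulVec x₂)|
        ≤ L * lnorm r ((y₁ - Bᵀ.mulVec x₁) - (y₂ - Bᵀ.mulVec x₂)) := hl _ _
      _ = L * lnorm r (δy - Bᵀ.mulVec δx) := by rw [hw]
      _ ≤ L * (lnorm s v * lnorm r Δ) := by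
          refine mul_le_mul_of_nonneg_left ?_ hL
          calc lnorm r (δy - Bᵀ.mulVec δx)
              ≤ ∑ i, (∑ j, (|M i j| * |Δ i|) ^ r) ^ ((1:ℝ)/r) := hstep1
            _ = ∑ i, |Δ i| * (∑ j, |M i j| ^ r) ^ ((1:ℝ)/r) :=
                Finset.sum_congr rfl fun i _ => hrow i
            _ ≤ ∑ i, v i * |Δ i| := hsum
            _ ≤ lnorm s v * lnorm r Δ := hholder
      _ = L * lnorm s v * lnorm r Δ := by ring
end

section
/- Let r, s ≥ 1 with 1/r + 1/s = 1 and let B ∈ ℝ^{p×K}. For every one-hot label vector y ∈ {e_1, ..., e_K} ⊂ ℝ^K and all x_1, x_2 ∈ ℝ^p, the multiclass logistic regression log-loss satisfies |h_B(x_1, y) − h_B(x_2, y)| ≤ (K^{1/s}·‖B‖_{s,r} + ‖B‖_{s,1}) · ‖x_1 − x_2‖_r; i.e., for fixed label, x ↦ h_B(x, y) is Lipschitz with respect to the ℓ_r norm with constant K^{1/s}‖B‖_{s,r} + ‖B‖_{s,1}, the regularization coefficient (per unit of ε) of the MLG-SR relaxation. -/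
open Real Matrix Finset

/-- The log-sum-exp function on ℝ^K. -/
noncomputable def lse {K : ℕ} (u : Fin K → ℝ) : ℝ := Real.log (∑ k, Real.exp (u k))

/-- The multiclass logistic regression log-loss: log(Σ_k e^{(B'x)_k}) − y'B'x. -/
noncomputable def logloss {p K : ℕ} (B : Matrix (Fin p) (Fin K) ℝ)
    (x : Fin p → ℝ) (y : Fin K → ℝ) : ℝ :=
  lse (Bᵀ.mulVec x) - y ⬝ᵥ Bᵀ.mulVec x

/-- Hölder inequality with absolute value on the left. -/
lemma holder_abs {n : ℕ} {r s : ℝ} (hs1 : 1 < s) (hsr : 1 / s + 1 / r = 1)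
    (f g : Fin n → ℝ) :
    |∑ j, f j * g j| ≤ (∑ j, |f j| ^ s) ^ (1 / s) * (∑ j, |g j| ^ r) ^ (1 / r) := by
  have hpq : Real.HolderConjugate s r := Real.holderConjugate_iff.mpr ⟨hs1, by simpa [one_div] using hsr⟩
  rw [abs_le]
  constructor
  · have h := Real.inner_le_Lp_mul_Lq (Finset.univ) (fun j => -f j) g hpq
    simp only [neg_mul, Finset.sum_neg_distrib, abs_neg] at h
    linarith
  · exact Real.inner_le_Lp_mul_Lq (Finset.univ) f g hpq

/-- One-sided log-sum-exp Lipschitz bound. -/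
lemma lse_sub_le {K : ℕ} (hK : 0 < K) (u v : Fin K → ℝ) {c : ℝ}
    (h : ∀ k, u k - v k ≤ c) : lse u - lse v ≤ c := by
  have hne : (Finset.univ : Finset (Fin K)).Nonempty := by
    simpa [Finset.univ_nonempty_iff] using Fin.pos_iff_nonempty.mp hK
  have hpos : (0 : ℝ) < ∑ k, Real.exp (v k) :=
    Finset.sum_pos (fun k _ => Real.exp_pos _) hne
  have hpos' : (0 : ℝ) < ∑ k, Real.exp (u k) :=
    Finset.sum_pos (fun k _ => Real.exp_pos _) hne
  have hle : (∑ k, Real.exp (u k)) ≤ Real.exp c * ∑ k, Real.exp (v k) := by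
    rw [Finset.mul_sum]
    refine Finset.sum_le_sum fun k _ => ?_
    rw [← Real.exp_add]
    exact Real.exp_le_exp.mpr (by linarith [h k])
  have hlog := Real.log_le_log hpos' hle
  rw [Real.log_mul (Real.exp_ne_zero c) (ne_of_gt hpos), Real.log_exp] at hlog
  simp only [lse]
  linarith

lemma abs_lse_sub_le {K : ℕ} (hK : 0 < K) (u v : Fin K → ℝ) {c : ℝ}
    (h : ∀ k, |u k - v k| ≤ c) : |lse u - lse v| ≤ c := by
  rw [abs_le]
  constructor
  · have := lse_sub_le hK v u (fun k => by have := abs_le.mp (h k); linarith [this.1])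
    linarith
  · exact lse_sub_le hK u v (fun k => (abs_le.mp (h k)).2)

/-- For 1/r + 1/s = 1 and a one-hot label y = e_i, the log-loss is
Lipschitz in x w.r.t. the ℓ_r norm with constant K^{1/s}‖B‖_{s,r} + ‖B‖_{s,1}. -/
theorem mlg_sr_lipschitz {p K : ℕ} (r s : ℝ)
    (hr : 1 ≤ r) (hs : 1 ≤ s) (hrs : 1 / r + 1 / s = 1)
    (B : Matrix (Fin p) (Fin K) ℝ) (i : Fin K) (x₁ x₂ : Fin p → ℝ) :
    |logloss B x₁ (Pi.single i 1) - logloss B x₂ (Pi.single i 1)| ≤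
      ((K : ℝ) ^ (1 / s) * Lnorm s r B + Lnorm s 1 B) * lnorm r (x₁ - x₂) := by
  have hK : 0 < K := i.pos
  have hr0 : (0 : ℝ) < r := lt_of_lt_of_le one_pos hr
  have hs0 : (0 : ℝ) < s := lt_of_lt_of_le one_pos hs
  have hs1 : 1 < s := by
    rcases lt_or_eq_of_le hs with h | h
    · exact h
    · exfalso; rw [← h] at hrs; simp at hrs
      have : (0:ℝ) < 1 / r := by positivity
      linarith
  have hsr : 1 / s + 1 / r = 1 := by linarith
  set z : Fin p → ℝ := x₁ - x₂ with hzdef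
  set L : ℝ := lnorm r z with hLdef
  have hLnn : 0 ≤ L := by
    rw [hLdef, lnorm]; positivity
  -- column norms
  set col : Fin K → ℝ := fun k => (∑ j, |B j k| ^ s) ^ (1 / s) with hcoldef
  have hcolnn : ∀ k, 0 ≤ col k := fun k => by rw [hcoldef]; positivity
  have hcol : ∀ k, |Bᵀ.mulVec x₁ k - Bᵀ.mulVec x₂ k| ≤ col k * L := by
    intro k
    have heq : Bᵀ.mulVec x₁ k - Bᵀ.mulVec x₂ k = ∑ j, B j k * z j := by
      simp [Matrix.mulVec, dotProduct, hzdef, Matrix.transpose_apply, mul_sub,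
        ← Finset.sum_sub_distrib, Pi.sub_apply]
    rw [heq]
    exact holder_abs hs1 hsr (fun j => B j k) z
  -- col k ≤ Lnorm s r B
  have hcol_le : ∀ k, col k ≤ Lnorm s r B := by
    intro k
    have hpow : col k ^ r = (∑ j, |B j k| ^ s) ^ (r / s) := by
      simp only [hcoldef]
      rw [← Real.rpow_mul (by positivity)]
      congr 1
      field_simp
    have hsum : (∑ j, |B j k| ^ s) ^ (r / s) ≤ ∑ k', (∑ j, |B j k'| ^ s) ^ (r / s) :=
      Finset.single_le_sum (f := fun k' => (∑ j, |B j k'| ^ s) ^ (r / s))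
        (fun k' _ => by positivity) (Finset.mem_univ k)
    have hck : col k = (col k ^ r) ^ (1 / r) := by
      rw [one_div, Real.rpow_rpow_inv (hcolnn k) (ne_of_gt hr0)]
    rw [hck, Lnorm]
    refine Real.rpow_le_rpow (by positivity) ?_ (by positivity)
    rw [hpow]; exact hsum
  -- col i ≤ Lnorm s 1 B
  have hLs1 : Lnorm s 1 B = ∑ k, col k := by
    rw [Lnorm]
    norm_num
    simp [hcoldef, one_div]
  have hcoli_le : col i ≤ Lnorm s 1 B := by
    rw [hLs1]
    exact Finset.single_le_sum (fun k _ => hcolnn k) (Finset.mem_univ i)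
  -- Lnorm s r B nonneg, K^{1/s} ≥ 1
  have hLsr_nn : 0 ≤ Lnorm s r B :=
    Real.rpow_nonneg (Finset.sum_nonneg fun k _ =>
      Real.rpow_nonneg (Finset.sum_nonneg fun j _ =>
        Real.rpow_nonneg (abs_nonneg _) _) _) _
  have hK1 : (1 : ℝ) ≤ (K : ℝ) := Nat.one_le_cast.mpr hK
  have hKge : (1 : ℝ) ≤ (K : ℝ) ^ (1 / s) := by
    calc (1 : ℝ) = (1 : ℝ) ^ (1 / s) := (Real.one_rpow _).symm
    _ ≤ (K : ℝ) ^ (1 / s) := Real.rpow_le_rpow zero_le_one hK1 (by positivity)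
  -- log-sum-exp part
  have hlse : |lse (Bᵀ.mulVec x₁) - lse (Bᵀ.mulVec x₂)| ≤ Lnorm s r B * L := by
    apply abs_lse_sub_le hK
    intro k
    exact le_trans (hcol k) (mul_le_mul_of_nonneg_right (hcol_le k) hLnn)
  -- linear part
  have hdot : ∀ x : Fin p → ℝ, (Pi.single i 1 : Fin K → ℝ) ⬝ᵥ Bᵀ.mulVec x
      = Bᵀ.mulVec x i := by
    intro x
    simp [dotProduct, Pi.single_apply]
  have hlin : |(Pi.single i 1 : Fin K → ℝ) ⬝ᵥ Bᵀ.mulVec x₁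
      - (Pi.single i 1 : Fin K → ℝ) ⬝ᵥ Bᵀ.mulVec x₂| ≤ Lnorm s 1 B * L := by
    rw [hdot, hdot]
    exact le_trans (hcol i) (mul_le_mul_of_nonneg_right hcoli_le hLnn)
  simp only [logloss]
  have habs : |lse (Bᵀ.mulVec x₁) - (Pi.single i 1 : Fin K → ℝ) ⬝ᵥ Bᵀ.mulVec x₁
      - (lse (Bᵀ.mulVec x₂) - (Pi.single i 1 : Fin K → ℝ) ⬝ᵥ Bᵀ.mulVec x₂)|
      ≤ |lse (Bᵀ.mulVec x₁) - lse (Bᵀ.mulVec x₂)|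
        + |(Pi.single i 1 : Fin K → ℝ) ⬝ᵥ Bᵀ.mulVec x₁
          - (Pi.single i 1 : Fin K → ℝ) ⬝ᵥ Bᵀ.mulVec x₂| := by
    rw [show lse (Bᵀ.mulVec x₁) - (Pi.single i 1 : Fin K → ℝ) ⬝ᵥ Bᵀ.mulVec x₁
      - (lse (Bᵀ.mulVec x₂) - (Pi.single i 1 : Fin K → ℝ) ⬝ᵥ Bᵀ.mulVec x₂)
      = (lse (Bᵀ.mulVec x₁) - lse (Bᵀ.mulVec x₂))
        - ((Pi.single i 1 : Fin K → ℝ) ⬝ᵥ Bᵀ.mulVec x₁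
          - (Pi.single i 1 : Fin K → ℝ) ⬝ᵥ Bᵀ.mulVec x₂) from by ring]
    exact abs_sub _ _
  refine le_trans habs ?_
  have h1 : Lnorm s r B * L ≤ (K : ℝ) ^ (1 / s) * Lnorm s r B * L := by
    have : Lnorm s r B ≤ (K : ℝ) ^ (1 / s) * Lnorm s r B := by
      nlinarith
    exact mul_le_mul_of_nonneg_right this hLnn
  have := add_le_add hlse hlin
  rw [add_mul]
  linarith
end

section
/- Let r, s ≥ 1 with 1/r + 1/s = 1 and let B ∈ ℝ^{p×K}. For every one-hot label vector y ∈ {e_1, ..., e_K} ⊂ ℝ^K and all x_1, x_2 ∈ ℝ^p, the multiclass logistic regression log-loss satisfies |h_B(x_1, y) − h_B(x_2, y)| ≤ (K^{1/s}·‖B'‖_{1,s} + ‖B‖_{s,1}) · ‖x_1 − x_2‖_r; i.e., for fixed label, x ↦ h_B(x, y) is Lipschitz with respect to the ℓ_r norm with constant K^{1/s}‖B'‖_{1,s} + ‖B‖_{s,1}, the regularization coefficient (per unit of ε) of the MLG-1S relaxation. -/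
open Real Matrix Finset

/-- If each coordinate of `u` exceeds `v` by at most `c`, then `lse u ≤ lse v + c`. -/
lemma lse_le {K : ℕ} [NeZero K] (u v : Fin K → ℝ) (c : ℝ) (h : ∀ k, u k ≤ v k + c) :
    lse u ≤ lse v + c := by
  have hpos : 0 < ∑ k, Real.exp (v k) :=
    Finset.sum_pos (fun k _ => Real.exp_pos _) (by simp [Finset.univ_nonempty])
  have hsum : ∑ k, Real.exp (u k) ≤ Real.exp c * ∑ k, Real.exp (v k) := by
    rw [Finset.mul_sum]
    refine Finset.sum_le_sum fun k _ => ?_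
    rw [← Real.exp_add]
    exact Real.exp_le_exp.mpr (by linarith [h k])
  have hlog := Real.log_le_log (by positivity) hsum
  rw [Real.log_mul (Real.exp_pos c).ne' hpos.ne', Real.log_exp] at hlog
  simp only [lse]
  linarith

/-- For 1/r + 1/s = 1 and a one-hot label y = e_i, the log-loss is
Lipschitz in x w.r.t. the ℓ_r norm with constant K^{1/s}‖B'‖_{1,s} + ‖B‖_{s,1}. -/
theorem mlg_1s_lipschitz {p K : ℕ} (r s : ℝ)
    (hr : 1 ≤ r) (hs : 1 ≤ s) (hrs : 1 / r + 1 / s = 1)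
    (B : Matrix (Fin p) (Fin K) ℝ) (i : Fin K) (x₁ x₂ : Fin p → ℝ) :
    |logloss B x₁ (Pi.single i 1) - logloss B x₂ (Pi.single i 1)| ≤
      ((K : ℝ) ^ (1 / s) * Lnorm 1 s Bᵀ + Lnorm s 1 B) * lnorm r (x₁ - x₂) := by
  haveI : NeZero K := ⟨(Fin.pos i).ne'⟩
  have hrpos : 0 < r := lt_of_lt_of_le one_pos hr
  have hspos : 0 < s := lt_of_lt_of_le one_pos hs
  have hs1 : 1 < s := by
    rw [← div_lt_one hspos]
    have : 0 < 1 / r := by positivity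
    linarith
  have hconj : Real.HolderConjugate s r := Real.holderConjugate_iff.mpr ⟨hs1, by simp only [one_div] at hrs ⊢; linarith⟩
  set d : Fin p → ℝ := x₁ - x₂ with hd
  set N : ℝ := lnorm r d with hN
  have hN0 : 0 ≤ N := by
    rw [hN, lnorm]; positivity
  -- Hölder
  have holder : ∀ (a : Fin p → ℝ), (∀ j, 0 ≤ a j) →
      ∑ j, a j * |d j| ≤ (∑ j, a j ^ s) ^ (1 / s) * N := by
    intro a ha
    have := Real.inner_le_Lp_mul_Lq_of_nonneg Finset.univ hconj
      (fun j _ => ha j) (fun j _ => abs_nonneg (d j))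
    simpa [hN, lnorm] using this
  set u : Fin K → ℝ := Bᵀ.mulVec x₁ with hu
  set v : Fin K → ℝ := Bᵀ.mulVec x₂ with hv
  have hw : ∀ k, |u k - v k| ≤ ∑ j, |B j k| * |d j| := by
    intro k
    rw [hu, hv, Matrix.mulVec, Matrix.mulVec, dotProduct, dotProduct,
      ← Finset.sum_sub_distrib]
    refine (Finset.abs_sum_le_sum_abs _ _).trans (le_of_eq ?_)
    refine Finset.sum_congr rfl fun j _ => ?_
    rw [← mul_sub, abs_mul, Matrix.transpose_apply, hd]
    rfl
  set C1 : ℝ := Lnorm 1 s Bᵀ with hC1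
  have hC1eq : C1 = (∑ j, (∑ k, |B j k|) ^ s) ^ (1 / s) := by
    rw [hC1, Lnorm]
    congr 1
    refine Finset.sum_congr rfl fun j _ => ?_
    rw [div_one]
    congr 1
    exact Finset.sum_congr rfl fun k _ => Real.rpow_one _
  have hC10 : 0 ≤ C1 := by
    rw [hC1eq]; positivity
  have hcoord : ∀ k, |u k - v k| ≤ C1 * N := by
    intro k
    refine (hw k).trans ?_
    have step : ∑ j, |B j k| * |d j| ≤ ∑ j, (∑ m, |B j m|) * |d j| := by
      refine Finset.sum_le_sum fun j _ => ?_
      refine mul_le_mul_of_nonneg_right ?_ (abs_nonneg _)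
      exact Finset.single_le_sum (f := fun m => |B j m|) (fun m _ => abs_nonneg _)
        (Finset.mem_univ k)
    refine step.trans ?_
    rw [hC1eq]
    exact holder _ (fun j => Finset.sum_nonneg fun m _ => abs_nonneg _)
  -- lse part
  have hlse : |lse u - lse v| ≤ C1 * N := by
    have h1 : lse u ≤ lse v + C1 * N := lse_le u v _ fun k => by
      have := (abs_le.mp (hcoord k)).2; linarith
    have h2 : lse v ≤ lse u + C1 * N := lse_le v u _ fun k => by
      have := (abs_le.mp (hcoord k)).1; linarith
    rw [abs_le]; constructor <;> linarith
  -- dot product part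
  have hdot : |u i - v i| ≤ Lnorm s 1 B * N := by
    have h1 : ∑ j, |B j i| * |d j| ≤ (∑ j, |B j i| ^ s) ^ (1 / s) * N :=
      holder _ (fun j => abs_nonneg _)
    have h2 : (∑ j, |B j i| ^ s) ^ (1 / s) ≤ Lnorm s 1 B := by
      have hnn : ∀ k : Fin K, (0:ℝ) ≤ (∑ j, |B j k| ^ s) ^ (1 / s) := fun k => by positivity
      have e : Lnorm s 1 B = ∑ k, (∑ j, |B j k| ^ s) ^ (1 / s) := by
        rw [Lnorm]
        norm_num
      rw [e]
      exact Finset.single_le_sum (fun k _ => hnn k) (Finset.mem_univ i)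
    exact (hw i).trans (h1.trans (mul_le_mul_of_nonneg_right h2 hN0))
  have hK : (1:ℝ) ≤ (K : ℝ) ^ (1 / s) := by
    refine Real.one_le_rpow ?_ (by positivity)
    exact_mod_cast Nat.one_le_iff_ne_zero.mpr (NeZero.ne K)
  have hsingle : Pi.single i (1:ℝ) ⬝ᵥ u = u i := by
    rw [single_dotProduct, one_mul]
  have hsingle' : Pi.single i (1:ℝ) ⬝ᵥ v = v i := by
    rw [single_dotProduct, one_mul]
  have key : |logloss B x₁ (Pi.single i 1) - logloss B x₂ (Pi.single i 1)| ≤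
      C1 * N + Lnorm s 1 B * N := by
    rw [logloss, logloss, ← hu, ← hv, hsingle, hsingle']
    calc |(lse u - u i) - (lse v - v i)| = |(lse u - lse v) + -(u i - v i)| := by ring_nf
      _ ≤ |lse u - lse v| + |-(u i - v i)| := abs_add_le _ _
      _ = |lse u - lse v| + |u i - v i| := by rw [abs_neg]
      _ ≤ C1 * N + Lnorm s 1 B * N := add_le_add hlse hdot
  refine key.trans ?_
  have : C1 * N ≤ (K : ℝ) ^ (1 / s) * C1 * N := by
    refine mul_le_mul_of_nonneg_right ?_ hN0
    nlinarith
  rw [hC1] at this ⊢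
  nlinarith
end

section
/- Let r, s ≥ 1 with 1/r + 1/s = 1 and let R_x, C̄ > 0. Suppose x ∈ ℝ^p satisfies ‖x‖_r ≤ R_x and B ∈ ℝ^{p×K} satisfies K^{1/s}‖B'‖_{1,s} + ‖B‖_{s,1} ≤ C̄. Then for every one-hot label vector y ∈ {e_1, ..., e_K} ⊂ ℝ^K, the multiclass logistic regression log-loss is bounded: 0 ≤ log(Σ_{k=1}^K e^{(B'x)_k}) − y'B'x ≤ R_x·C̄ + log K. -/
open Real Matrix Finset

lemma Lnorm_nonneg {m n : ℕ} (r s : ℝ) (A : Matrix (Fin m) (Fin n) ℝ) :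
    0 ≤ Lnorm r s A := by
  unfold Lnorm; positivity

lemma Lnorm_s_one {p K : ℕ} (s : ℝ) (B : Matrix (Fin p) (Fin K) ℝ) :
    Lnorm s 1 B = ∑ k, (∑ p', |B p' k| ^ s) ^ (1 / s) := by
  unfold Lnorm
  rw [show (1:ℝ)/1 = 1 by norm_num, Real.rpow_one]

set_option maxHeartbeats 1000000 in
/-- Under ‖x‖_r ≤ R_x and K^{1/s}‖B'‖_{1,s} + ‖B‖_{s,1} ≤ C̄ (with
1/r + 1/s = 1), the log-loss with any one-hot label y = e_i satisfies
0 ≤ h_B(x, y) ≤ R_x·C̄ + log K. -/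
theorem mlg_1s_logloss_bounded {p K : ℕ} (r s Rx Cbar : ℝ)
    (hr : 1 ≤ r) (hs : 1 ≤ s) (hrs : 1 / r + 1 / s = 1)
    (hRx : 0 < Rx) (hCbar : 0 < Cbar)
    (x : Fin p → ℝ) (hx : lnorm r x ≤ Rx)
    (B : Matrix (Fin p) (Fin K) ℝ)
    (hB : (K : ℝ) ^ (1 / s) * Lnorm 1 s Bᵀ + Lnorm s 1 B ≤ Cbar)
    (i : Fin K) :
    0 ≤ logloss B x (Pi.single i 1) ∧
    logloss B x (Pi.single i 1) ≤ Rx * Cbar + Real.log K := by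
  have hr0 : (0:ℝ) < r := lt_of_lt_of_le one_pos hr
  have hs0 : (0:ℝ) < s := lt_of_lt_of_le one_pos hs
  have hinvr : (0:ℝ) < 1 / r := by positivity
  have hinvs : (0:ℝ) < 1 / s := by positivity
  have hs1 : 1 < s := by
    rw [← div_lt_one hs0] at *
    linarith
  have hpq : Real.HolderConjugate s r :=
    Real.holderConjugate_iff.2 ⟨hs1, by rw [← one_div, ← one_div]; linarith⟩
  set u : Fin K → ℝ := Bᵀ.mulVec x with hu
  set c : Fin K → ℝ := fun k => (∑ p', |B p' k| ^ s) ^ (1 / s) with hc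
  have hcnn : ∀ k, 0 ≤ c k := fun k => by positivity
  have hxnn : 0 ≤ lnorm r x := by unfold lnorm; positivity
  -- Hölder: |u k| ≤ Rx * c k
  have key : ∀ k, |u k| ≤ Rx * c k := by
    intro k
    have h1 : |u k| ≤ ∑ p', |B p' k| * |x p'| := by
      have : u k = ∑ p', B p' k * x p' := by
        simp [hu, Matrix.mulVec, dotProduct, Matrix.transpose_apply]
      rw [this]
      calc |∑ p', B p' k * x p'| ≤ ∑ p', |B p' k * x p'| :=
            Finset.abs_sum_le_sum_abs _ _
        _ = ∑ p', |B p' k| * |x p'| := by simp [abs_mul]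
    have h2 : ∑ p', |B p' k| * |x p'| ≤
        (∑ p', |(|B p' k|)| ^ s) ^ (1 / s) * (∑ p', |(|x p'|)| ^ r) ^ (1 / r) :=
      Real.inner_le_Lp_mul_Lq Finset.univ (fun p' => |B p' k|) (fun p' => |x p'|) hpq
    simp only [abs_abs] at h2
    calc |u k| ≤ c k * lnorm r x := by
          refine h1.trans (h2.trans_eq ?_)
          simp [hc, lnorm]
      _ ≤ c k * Rx := by
          exact mul_le_mul_of_nonneg_left hx (hcnn k)
      _ = Rx * c k := mul_comm _ _
  -- sum of c is bounded by Cbar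
  have hsumc : ∑ k, c k ≤ Cbar := by
    have h1 : Lnorm s 1 B = ∑ k, c k := by rw [Lnorm_s_one s B, hc]
    have h2 : 0 ≤ (K : ℝ) ^ (1 / s) * Lnorm 1 s Bᵀ :=
      mul_nonneg (Real.rpow_nonneg (Nat.cast_nonneg K) _) (Lnorm_nonneg 1 s Bᵀ)
    linarith [hB]
  have hK : 0 < K := i.pos
  have hKR : (0:ℝ) < K := by exact_mod_cast hK
  -- logloss simplification
  have hdot : (Pi.single i 1 : Fin K → ℝ) ⬝ᵥ u = u i := by
    simp [dotProduct, Pi.single_apply]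
  have hloss : logloss B x (Pi.single i 1) = lse u - u i := by
    rw [logloss, ← hu, hdot]
  have hsum_pos : 0 < ∑ k, Real.exp (u k) :=
    Finset.sum_pos (fun k _ => Real.exp_pos _) ⟨i, Finset.mem_univ i⟩
  constructor
  · -- lower bound
    rw [hloss, sub_nonneg]
    have : Real.exp (u i) ≤ ∑ k, Real.exp (u k) :=
      Finset.single_le_sum (fun k _ => (Real.exp_pos _).le) (Finset.mem_univ i)
    calc u i = Real.log (Real.exp (u i)) := (Real.log_exp _).symm
      _ ≤ Real.log (∑ k, Real.exp (u k)) := Real.log_le_log (Real.exp_pos _) this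
  · -- upper bound
    obtain ⟨j, -, hj⟩ := Finset.exists_max_image Finset.univ u ⟨i, Finset.mem_univ i⟩
    have hlse : lse u ≤ Real.log K + u j := by
      have h1 : ∑ k, Real.exp (u k) ≤ (K : ℝ) * Real.exp (u j) := by
        calc ∑ k, Real.exp (u k) ≤ ∑ _k : Fin K, Real.exp (u j) :=
              Finset.sum_le_sum (fun k _ => Real.exp_le_exp.mpr (hj k (Finset.mem_univ k)))
          _ = (K : ℝ) * Real.exp (u j) := by simp [mul_comm]
      calc lse u ≤ Real.log ((K : ℝ) * Real.exp (u j)) :=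
            Real.log_le_log hsum_pos h1
        _ = Real.log K + u j := by
            rw [Real.log_mul (ne_of_gt hKR) (ne_of_gt (Real.exp_pos _)), Real.log_exp]
    have hdiff : u j - u i ≤ Rx * Cbar := by
      by_cases hji : j = i
      · subst hji; simp; positivity
      · have h1 : u j - u i ≤ |u j| + |u i| := by
          have := abs_nonneg (u j); have := abs_nonneg (u i)
          have h2 := le_abs_self (u j); have h3 := neg_abs_le (u i)
          linarith
        have h2 : c j + c i ≤ ∑ k, c k := by
          have : ∑ k ∈ ({j, i} : Finset (Fin K)), c k ≤ ∑ k, c k :=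
            Finset.sum_le_sum_of_subset_of_nonneg (Finset.subset_univ _)
              (fun k _ _ => hcnn k)
          rwa [Finset.sum_pair hji] at this
        calc u j - u i ≤ |u j| + |u i| := h1
          _ ≤ Rx * c j + Rx * c i := add_le_add (key j) (key i)
          _ = Rx * (c j + c i) := by ring
          _ ≤ Rx * ∑ k, c k := mul_le_mul_of_nonneg_left h2 hRx.le
          _ ≤ Rx * Cbar := mul_le_mul_of_nonneg_left hsumc hRx.le
    rw [hloss]
    linarith
end
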